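/- For each m ∈ ℕ and d ≥ 1 there exists a constant K(m) depending only on m (and d) such that the fundamental spline interpolation operator J^m is bounded on L_∞: for every bounded function f on ℝ^d one has ‖J^m f‖_∞ ≤ K(m) ‖f‖_∞. -/

import Mathlib

open MeasureTheory Filter Topology
open scoped ENNReal NNReal BigOperators

noncomputable section

/-- The m-th order cardinal B-spline `N_m`, with `N_1 = χ_{[0,1)}` and
`N_m = N_{m-1} * N_1` (convolution). -/
def bspline : ℕ → ℝ → ℝ
  | 0, _ => 0
  | 1, x => if 0 ≤ x ∧ x < 1 then 1 else 0
  | (n+2), x => ∫ t in (0:ℝ)..1, bspline (n+1) (x - t)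

/-- The m-th order Chui–Wang wavelet
`ψ_m(x) = 2^{-(m-1)} Σ_{l=0}^{2m-2} (-1)^l N_{2m}(l+1) N_{2m}^{(m)}(2x-l)`. -/
def chuiWang (m : ℕ) (x : ℝ) : ℝ :=
  ((2:ℝ)^(m-1))⁻¹ * ∑ l ∈ Finset.range (2*m-1),
    (-1:ℝ)^l * bspline (2*m) ((l:ℝ)+1) * iteratedDeriv m (bspline (2*m)) (2*x - (l:ℝ))

/-- `ψs` is the dual wavelet of the m-th order Chui–Wang wavelet `ψ_m`:
it is biorthogonal to the system `2^{j/2} ψ_m(2^j · − l)` and it belongs to the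
`L_2`-closure of the span of the integer translates of `ψ_m` (the wavelet space `W_0`). -/
def IsDualWavelet (m : ℕ) (ψs : ℝ → ℝ) : Prop :=
  (∀ j k l : ℤ, (∫ x : ℝ, ψs (x - (k:ℝ)) * ((2:ℝ)^((j:ℝ)/2) * chuiWang m ((2:ℝ)^j * x - (l:ℝ))))
      = if j = 0 ∧ k = l then 1 else 0) ∧
  ∀ δ : ℝ, 0 < δ → ∃ b : ℤ →₀ ℝ,
    eLpNorm (fun x : ℝ => ψs x - ∑ n ∈ b.support, b n * chuiWang m (x - (n:ℝ))) 2 volume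
      < ENNReal.ofReal δ

/-- `Lc` is the cardinal interpolating spline of order m:
`Lc(x) = Σ_n c_n N_m(x+m/2−n)` with exponentially decaying coefficients,
and `Lc(j) = δ_{j,0}`. -/
def IsCardinalSpline (m : ℕ) (Lc : ℝ → ℝ) : Prop :=
  (∃ c : ℤ → ℝ, (∃ C > (0:ℝ), ∃ q : ℝ, 0 < q ∧ q < 1 ∧ ∀ n : ℤ, |c n| ≤ C * q ^ n.natAbs) ∧
    ∀ x : ℝ, Lc x = ∑' n : ℤ, c n * bspline m (x + (m:ℝ)/2 - (n:ℝ))) ∧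
  ∀ j : ℤ, Lc (j : ℝ) = if j = 0 then 1 else 0

/-- Univariate Faber splines of order 2m:
`s_{2m;j,k}(x) = 2^{mj} ∫_{-∞}^x ψ_m^*(2^j t − k) (x−t)^{m-1}/(m-1)! dt` for `j ≥ 0`,
and `s_{2m;-1,k} = L^{2m}(·−k)`. -/
def faber1 (m : ℕ) (ψs Lc : ℝ → ℝ) (j k : ℤ) (x : ℝ) : ℝ :=
  if j = -1 then Lc (x - (k:ℝ))
  else (2:ℝ)^((m:ℤ) * j) *
    ∫ t in Set.Iic x, ψs ((2:ℝ)^j * t - (k:ℝ)) * (x - t)^(m-1) / ((m-1).factorial : ℝ)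

/-- Tensorized Faber splines `s_{2m;j,k}(x) = Π_i s_{2m;j_i,k_i}(x_i)`. -/
def faber (d m : ℕ) (ψs Lc : ℝ → ℝ) (j k : Fin d → ℤ) (x : Fin d → ℝ) : ℝ :=
  ∏ i, faber1 m ψs Lc (j i) (k i) (x i)

/-- First order difference with step `h` in direction `i`. -/
def dirDiff {d : ℕ} (i : Fin d) (h : ℝ) (f : (Fin d → ℝ) → ℝ) : (Fin d → ℝ) → ℝ :=
  fun x => f (Function.update x i (x i + h)) - f x

/-- Mixed `n`-th order difference operator acting in the directions contained in `e`. -/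
def mixedDiff {d : ℕ} (n : ℕ) (e : Finset (Fin d)) (h : Fin d → ℝ)
    (f : (Fin d → ℝ) → ℝ) : (Fin d → ℝ) → ℝ :=
  e.toList.foldr (fun i g => (dirDiff i (h i))^[n] g) f

/-- `e(j) = {i : j_i ≥ 0}`. -/
def posSet {d : ℕ} (j : Fin d → ℤ) : Finset (Fin d) :=
  Finset.univ.filter (fun i => 0 ≤ j i)

/-- The dyadic sample points `x_{j;k,l}`. -/
def samplePt {d : ℕ} (j k : Fin d → ℤ) (l : Fin d → ℕ) : Fin d → ℝ := fun i =>
  if j i = -1 then (k i : ℝ) else (2 * (k i : ℝ) + (l i : ℝ)) / (2:ℝ)^(j i + 1)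

/-- The Faber coefficients `λ_{2m;j,k}(f)`. -/
def faberCoeff (d m : ℕ) (f : (Fin d → ℝ) → ℝ) (j k : Fin d → ℤ) : ℝ :=
  ∑ l : Fin d → Fin (2*m-1),
    (∏ i ∈ posSet j, (-1:ℝ)^((l i : ℕ))) * (∏ i, bspline (2*m) (((l i : ℕ) : ℝ) + 1)) *
      mixedDiff (2*m) (posSet j) (fun i => (2:ℝ)^(-(j i) - 1)) f
        (samplePt j k (fun i => (l i : ℕ)))

/-- Membership in the tensor-product spline space `V_N^m`. -/
def MemVNm (d m N : ℕ) (f : (Fin d → ℝ) → ℝ) : Prop :=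
  ∃ a : Fin d → ℤ → ℝ, (∀ i, Summable fun n : ℤ => |a i n|) ∧
    ∀ x : Fin d → ℝ, f x = ∏ i, ∑' n : ℤ, a i n * bspline m ((2:ℝ)^N * x i - (n:ℝ))

/-- The fundamental spline interpolation operator `J_N^m` (built from the
cardinal interpolating spline `Lc`). -/
def JNm (d N : ℕ) (Lc : ℝ → ℝ) (f : (Fin d → ℝ) → ℝ) (x : Fin d → ℝ) : ℝ :=
  ∑' n : Fin d → ℤ, f (fun i => (n i : ℝ) / (2:ℝ)^N) * ∏ i, Lc ((2:ℝ)^N * x i - (n i : ℝ))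

/-- The truncated Faber spline expansion operator `S_N^m`. -/
def SNm (d m N : ℕ) (ψs Lc : ℝ → ℝ) (f : (Fin d → ℝ) → ℝ) (x : Fin d → ℝ) : ℝ :=
  ∑' j : Fin d → ℤ, if (∀ i, -1 ≤ j i ∧ j i < (N:ℤ)) then
      ∑' k : Fin d → ℤ, faberCoeff d m f j k * faber d m ψs Lc j k x
    else 0

/-- The dyadic interval `I_{j,k}`. -/
def dyadicI (j k : ℤ) : Set ℝ :=
  if j = -1 then Set.Icc ((k:ℝ) - 1/2) ((k:ℝ) + 1/2)
  else Set.Icc ((2:ℝ)^(-j) * (k:ℝ)) ((2:ℝ)^(-j) * ((k:ℝ)+1))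

/-- The dyadic box `I_{j,k}` in `ℝ^d`. -/
def dyadicBox (d : ℕ) (j k : Fin d → ℤ) : Set (Fin d → ℝ) :=
  {x | ∀ i, x i ∈ dyadicI (j i) (k i)}

/-- `|j|_1` as a real number. -/
def jsum {d : ℕ} (j : Fin d → ℤ) : ℝ := ∑ i, (j i : ℝ)

/-- The weight `2^{r|j|_1}`. -/
def wt (r : ℝ) {d : ℕ} (j : Fin d → ℤ) : ℝ≥0∞ := ENNReal.ofReal ((2:ℝ) ^ (r * jsum j))

/-- The weight `2^{r|j|_1}` for `j ∈ ℕ_0^d`. -/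
def wtN (r : ℝ) {d : ℕ} (j : Fin d → ℕ) : ℝ≥0∞ :=
  ENNReal.ofReal ((2:ℝ) ^ (r * ∑ i, (j i : ℝ)))

/-- `L_p` quasi-norm (`0 < p ≤ ∞`) of an `ℝ≥0∞`-valued function. -/
def lpNormE {α : Type*} [MeasurableSpace α] (μ : Measure α) (p : ℝ≥0∞) (g : α → ℝ≥0∞) : ℝ≥0∞ :=
  if p = ∞ then essSup g μ else (∫⁻ x, g x ^ p.toReal ∂μ) ^ (1 / p.toReal)

/-- `L_p` quasi-norm (`0 < p ≤ ∞`) of a real valued function. -/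
def lpNorm {α : Type*} [MeasurableSpace α] (μ : Measure α) (p : ℝ≥0∞) (f : α → ℝ) : ℝ≥0∞ :=
  lpNormE μ p (fun x => (‖f x‖₊ : ℝ≥0∞))

/-- The step function `Σ_k λ_{j,k} χ_{j,k}` of level `j`. -/
def layerFun (d : ℕ) (lam : (Fin d → ℤ) → (Fin d → ℤ) → ℝ) (j : Fin d → ℤ)
    (x : Fin d → ℝ) : ℝ :=
  ∑' k : Fin d → ℤ, Set.indicator (dyadicBox d j k) (fun _ => lam j k) x

/-- The index set `ℕ_{-1}^d`. -/
def IdxJ (d : ℕ) := {j : Fin d → ℤ // ∀ i, -1 ≤ j i}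

/-- The sequence space quasi-norm `s^r_{p,θ} b`. -/
def sbNorm (d : ℕ) (r : ℝ) (p θ : ℝ≥0∞) (lam : (Fin d → ℤ) → (Fin d → ℤ) → ℝ) : ℝ≥0∞ :=
  if θ = ∞ then ⨆ j : IdxJ d, wt r j.1 * lpNorm volume p (layerFun d lam j.1)
  else (∑' j : IdxJ d, (wt r j.1 * lpNorm volume p (layerFun d lam j.1)) ^ θ.toReal) ^ (1/θ.toReal)

/-- The sequence space quasi-norm `s^r_{p,θ} f`. -/
def sfNorm (d : ℕ) (r : ℝ) (p θ : ℝ≥0∞) (lam : (Fin d → ℤ) → (Fin d → ℤ) → ℝ) : ℝ≥0∞ :=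
  if θ = ∞ then lpNormE volume p (fun x => ⨆ j : IdxJ d, wt r j.1 * (‖layerFun d lam j.1 x‖₊ : ℝ≥0∞))
  else lpNormE volume p
    (fun x => (∑' j : IdxJ d, (wt r j.1 * (‖layerFun d lam j.1 x‖₊ : ℝ≥0∞)) ^ θ.toReal) ^ (1/θ.toReal))

/-- An admissible pair of local mean kernels `Ψ_0, Ψ_1 ∈ S(ℝ)` with `L` vanishing
moments for `Ψ_1` and nondegenerate Fourier transforms. -/
structure LocalMeanKernel (L : ℕ) where
  Ψ0 : SchwartzMap ℝ ℝ
  Ψ1 : SchwartzMap ℝ ℝ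
  ε : ℝ
  ε_pos : 0 < ε
  pos0 : ∀ ξ : ℝ, |ξ| < ε → FourierTransform.fourier (fun x : ℝ => (Ψ0 x : ℂ)) ξ ≠ 0
  pos1 : ∀ ξ : ℝ, ε/2 < |ξ| → |ξ| < 2*ε → FourierTransform.fourier (fun x : ℝ => (Ψ1 x : ℂ)) ξ ≠ 0
  moment : ∀ α : ℕ, α < L → (∫ x : ℝ, x ^ α * Ψ1 x) = 0

/-- The dilated local means `Ψ_j`. -/
def lmFun {L : ℕ} (K : LocalMeanKernel L) (j : ℕ) (x : ℝ) : ℝ :=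
  if j = 0 then K.Ψ0 x else (2:ℝ)^(j-1) * K.Ψ1 ((2:ℝ)^(j-1) * x)

/-- The convolution `Ψ_j * f` with the tensorized local means, `j ∈ ℕ_0^d`. -/
def lmConv (d : ℕ) {L : ℕ} (K : LocalMeanKernel L) (j : Fin d → ℕ)
    (f : (Fin d → ℝ) → ℝ) (x : Fin d → ℝ) : ℝ :=
  ∫ y : Fin d → ℝ, (∏ i, lmFun K (j i) (x i - y i)) * f y

/-- The Besov quasi-norm of dominating mixed smoothness `S^r_{p,θ}B(ℝ^d)`
(with respect to the local mean kernel `K`). -/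
def besovNorm (d : ℕ) {L : ℕ} (K : LocalMeanKernel L) (r : ℝ) (p θ : ℝ≥0∞)
    (f : (Fin d → ℝ) → ℝ) : ℝ≥0∞ :=
  if θ = ∞ then ⨆ j : Fin d → ℕ, wtN r j * lpNorm volume p (lmConv d K j f)
  else (∑' j : Fin d → ℕ, (wtN r j * lpNorm volume p (lmConv d K j f)) ^ θ.toReal) ^ (1/θ.toReal)

/-- The Lizorkin–Triebel quasi-norm of dominating mixed smoothness `S^r_{p,θ}F(ℝ^d)`
(with respect to the local mean kernel `K`). -/
def tlNorm (d : ℕ) {L : ℕ} (K : LocalMeanKernel L) (r : ℝ) (p θ : ℝ≥0∞)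
    (f : (Fin d → ℝ) → ℝ) : ℝ≥0∞ :=
  if θ = ∞ then lpNormE volume p (fun x => ⨆ j : Fin d → ℕ, wtN r j * (‖lmConv d K j f x‖₊ : ℝ≥0∞))
  else lpNormE volume p
    (fun x => (∑' j : Fin d → ℕ, (wtN r j * (‖lmConv d K j f x‖₊ : ℝ≥0∞)) ^ θ.toReal) ^ (1/θ.toReal))

/-- The index set of the tensorized Faber spline system. -/
def FaberIdx (d : ℕ) := IdxJ d × (Fin d → ℤ)

/-- Unconditional convergence of the series `Σ term_{j,k}` to `f` with respect
to the quasi-norm `Nrm`: the net of finite partial sums converges to `f`. -/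
def UnconditionalTo (d : ℕ) (Nrm : ((Fin d → ℝ) → ℝ) → ℝ≥0∞)
    (term : FaberIdx d → (Fin d → ℝ) → ℝ) (f : (Fin d → ℝ) → ℝ) : Prop :=
  ∀ δ : ℝ, 0 < δ → ∃ F₀ : Finset (FaberIdx d), ∀ F : Finset (FaberIdx d), F₀ ⊆ F →
    Nrm (fun x => f x - ∑ jk ∈ F, term jk x) < ENNReal.ofReal δ

/-- The term `λ_{2m;j,k}(f) s_{2m;j,k}` of the Faber spline series of `f`. -/
def faberTerm (d m : ℕ) (ψs Lc : ℝ → ℝ) (f : (Fin d → ℝ) → ℝ)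
    (jk : FaberIdx d) (x : Fin d → ℝ) : ℝ :=
  faberCoeff d m f jk.1.1 jk.2 * faber d m ψs Lc jk.1.1 jk.2 x

/-- The term `λ_{2m;j,k} s_{2m;j,k}` for a given coefficient sequence. -/
def seqTerm (d m : ℕ) (ψs Lc : ℝ → ℝ) (lam : (Fin d → ℤ) → (Fin d → ℤ) → ℝ)
    (jk : FaberIdx d) (x : Fin d → ℝ) : ℝ :=
  lam jk.1.1 jk.2 * faber d m ψs Lc jk.1.1 jk.2 x

/-- The exponent `α_i`: `α = 1` if `l ≥ 0` and `α = 2m−1` if `l < 0`. -/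
def alphaExp (m : ℕ) (l : ℤ) : ℤ := if 0 ≤ l then 1 else 2*(m:ℤ) - 1

/-- The dyadic point `x_{j,k}`: `2^{-j}k` for `j ≥ 0` and `k` for `j = -1`. -/
def dyadicPt (j k : ℤ) : ℝ := if j = -1 then (k:ℝ) else (2:ℝ)^(-j) * (k:ℝ)

end

lemma intervalIntegrable_of_bounded {f : ℝ → ℝ} (hf : Measurable f)
    (h0 : ∀ x, |f x| ≤ 1) (a b : ℝ) : IntervalIntegrable f volume a b := by
  rw [intervalIntegrable_iff]
  have hc : IntegrableOn (fun _ : ℝ => (1:ℝ)) (Set.uIoc a b) volume :=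
    integrableOn_const measure_Ioc_lt_top.ne
  exact hc.mono' hf.aestronglyMeasurable (ae_of_all _ fun x => by
    rw [Real.norm_eq_abs]; exact h0 x)

lemma bspline_prop (m : ℕ) : Measurable (bspline m) ∧ (∀ x, 0 ≤ bspline m x) ∧
    (∀ x, bspline m x ≤ 1) := by
  induction m with
  | zero => exact ⟨measurable_const, fun x => le_refl 0, fun x => zero_le_one⟩
  | succ n ih =>
    match n, ih with
    | 0, _ =>
      refine ⟨?_, fun x => ?_, fun x => ?_⟩
      · have : bspline 1 = Set.indicator (Set.Ico (0:ℝ) 1) (fun _ => (1:ℝ)) := by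
          funext x
          simp [bspline, Set.indicator, Set.mem_Ico]
        rw [this]
        exact (measurable_const).indicator measurableSet_Ico
      · simp only [bspline]; positivity
      · simp only [bspline]; split <;> norm_num
    | (k+1), ih =>
      obtain ⟨hmeas, hnn, hle⟩ := ih
      have habs : ∀ x, |bspline (k+1) x| ≤ 1 := fun x => by
        rw [abs_of_nonneg (hnn x)]; exact hle x
      have hint : ∀ a b : ℝ, IntervalIntegrable (bspline (k+1)) volume a b :=
        intervalIntegrable_of_bounded hmeas habs
      have heq : ∀ x : ℝ, bspline (k+2) x = ∫ s in (x-1)..x, bspline (k+1) s := by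
        intro x
        show (∫ t in (0:ℝ)..1, bspline (k+1) (x - t)) = _
        rw [intervalIntegral.integral_comp_sub_left (bspline (k+1)) x]
        norm_num
      refine ⟨?_, fun x => ?_, fun x => ?_⟩
      · have hcont : Continuous fun y => ∫ s in (0:ℝ)..y, bspline (k+1) s :=
          intervalIntegral.continuous_primitive (fun a b => hint a b) 0
        have : (fun x => bspline (k+2) x)
            = fun x => (∫ s in (0:ℝ)..x, bspline (k+1) s)
              - ∫ s in (0:ℝ)..(x-1), bspline (k+1) s := by
          funext x
          rw [heq x, ← intervalIntegral.integral_interval_sub_left (hint 0 x) (hint 0 (x-1))]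
        rw [show bspline (k+2) = fun x => bspline (k+2) x from rfl, this]
        exact (hcont.sub (hcont.comp (continuous_id.sub continuous_const))).measurable
      · show 0 ≤ ∫ t in (0:ℝ)..1, bspline (k+1) (x - t)
        exact intervalIntegral.integral_nonneg zero_le_one (fun t _ => hnn _)
      · show (∫ t in (0:ℝ)..1, bspline (k+1) (x - t)) ≤ 1
        have h2 : (∫ t in (0:ℝ)..1, bspline (k+1) (x - t)) ≤ ∫ t in (0:ℝ)..1, (1:ℝ) := by
          refine intervalIntegral.integral_mono_on zero_le_one ?_ intervalIntegrable_const
            (fun t _ => hle _)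
          exact intervalIntegrable_of_bounded (hmeas.comp (measurable_const.sub measurable_id))
            (fun t => habs _) 0 1
        simpa using h2

lemma bspline_support (m : ℕ) (x : ℝ) (h : x < 0 ∨ (m:ℝ) ≤ x) : bspline m x = 0 := by
  induction m generalizing x with
  | zero => rfl
  | succ n ih =>
    match n, ih with
    | 0, _ =>
      simp only [bspline]
      rcases h with h | h
      · simp [not_le.mpr h]
      · norm_num at h ⊢
        intro h0; linarith
    | (k+1), ih =>
      show (∫ t in (0:ℝ)..1, bspline (k+1) (x - t)) = 0
      rw [intervalIntegral.integral_congr (g := fun _ => (0:ℝ)), intervalIntegral.integral_zero]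
      intro t ht
      rw [Set.uIcc_of_le zero_le_one] at ht
      apply ih
      rcases h with h | h
      · exact Or.inl (by cases ht; linarith)
      · refine Or.inr ?_
        push_cast at h ⊢
        cases ht; linarith

lemma sum_bspline_le (m : ℕ) (y : ℝ) (F : Finset ℤ) :
    ∑ n ∈ F, bspline m (y - (n:ℝ)) ≤ (m:ℝ) := by
  classical
  set S : Finset ℤ := Finset.Icc (⌊y⌋ - m + 1) ⌊y⌋ with hS
  have hzero : ∀ n ∈ F, n ∉ F ∩ S → bspline m (y - (n:ℝ)) = 0 := by
    intro n hn hns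
    have hnS : n ∉ S := fun h => hns (Finset.mem_inter.mpr ⟨hn, h⟩)
    rw [hS, Finset.mem_Icc, not_and_or] at hnS
    apply bspline_support
    rcases hnS with h | h
    · push_neg at h
      right
      have h2 : (n:ℝ) ≤ (⌊y⌋:ℝ) - m := by exact_mod_cast (by omega : n ≤ ⌊y⌋ - m)
      have := Int.floor_le y
      push_cast at h2 ⊢
      linarith
    · push_neg at h
      left
      have h2 : (⌊y⌋:ℝ) + 1 ≤ (n:ℝ) := by exact_mod_cast (by omega : ⌊y⌋ + 1 ≤ n)
      have := Int.lt_floor_add_one y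
      linarith
  have h1 : ∑ n ∈ F, bspline m (y - (n:ℝ)) = ∑ n ∈ F ∩ S, bspline m (y - (n:ℝ)) :=
    (Finset.sum_subset Finset.inter_subset_left (fun n hn hns => hzero n hn hns)).symm
  rw [h1]
  calc ∑ n ∈ F ∩ S, bspline m (y - (n:ℝ)) ≤ ∑ _n ∈ F ∩ S, (1:ℝ) :=
        Finset.sum_le_sum (fun n _ => (bspline_prop m).2.2 _)
    _ = ((F ∩ S).card : ℝ) := by simp
    _ ≤ (S.card : ℝ) := by
        exact_mod_cast Nat.cast_le.mpr (Finset.card_le_card Finset.inter_subset_right)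
    _ ≤ (m:ℝ) := by
        rw [hS, Int.card_Icc]
        have hmeq : (⌊y⌋ + 1 - (⌊y⌋ - (m:ℤ) + 1)).toNat = m := by omega
        rw [hmeq]

lemma sum_Lc_le (m : ℕ) (Lc : ℝ → ℝ) (c : ℤ → ℝ) (C q : ℝ) (hC : 0 < C)
    (hq0 : 0 < q) (hq1 : q < 1) (hc : ∀ n : ℤ, |c n| ≤ C * q ^ n.natAbs)
    (hrep : ∀ x : ℝ, Lc x = ∑' n : ℤ, c n * bspline m (x + (m:ℝ)/2 - (n:ℝ)))
    (x : ℝ) (F : Finset ℤ) :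
    ∑ n ∈ F, |Lc (x - (n:ℝ))| ≤ (m:ℝ) * C * ∑' k : ℤ, q ^ k.natAbs := by
  classical
  have hqsum : Summable fun k : ℤ => q ^ k.natAbs := by
    apply Summable.of_nat_of_neg
    · simpa using summable_geometric_of_lt_one hq0.le hq1
    · have : ∀ n : ℕ, ((-n : ℤ)).natAbs = n := fun n => by simp
      simpa [this] using summable_geometric_of_lt_one hq0.le hq1
  set N : ℤ → ℝ → ℝ := fun k z => bspline m (z + (m:ℝ)/2 - (k:ℝ)) with hN
  have hNnn : ∀ k z, 0 ≤ N k z := fun k z => (bspline_prop m).2.1 _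
  have hNle : ∀ k z, N k z ≤ 1 := fun k z => (bspline_prop m).2.2 _
  have hterm : ∀ (z : ℝ) (k : ℤ), |c k * N k z| ≤ C * q ^ k.natAbs := by
    intro z k
    rw [abs_mul]
    calc |c k| * |N k z| ≤ (C * q ^ k.natAbs) * 1 := by
          apply mul_le_mul (hc k) _ (abs_nonneg _) (by positivity)
          rw [abs_of_nonneg (hNnn k z)]; exact hNle k z
      _ = C * q ^ k.natAbs := by ring
  have hsummN : ∀ z : ℝ, Summable fun k : ℤ => |c k * N k z| := by
    intro z
    exact Summable.of_nonneg_of_le (fun k => abs_nonneg _) (hterm z)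
      (hqsum.mul_left C)
  have hLcbound : ∀ n : ℤ, |Lc (x - (n:ℝ))| ≤ ∑' k : ℤ, |c k| * N k (x - (n:ℝ)) := by
    intro n
    rw [hrep]
    have h1 : |∑' k : ℤ, c k * N k (x - (n:ℝ))| ≤ ∑' k : ℤ, |c k * N k (x - (n:ℝ))| := by
      simpa only [Real.norm_eq_abs] using norm_tsum_le_tsum_norm (f := fun k : ℤ => c k * N k (x - (n:ℝ)))
        (by simpa only [Real.norm_eq_abs] using hsummN (x - (n:ℝ)))
    calc |∑' k : ℤ, c k * bspline m (x - (n:ℝ) + (m:ℝ)/2 - (k:ℝ))|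
        = |∑' k : ℤ, c k * N k (x - (n:ℝ))| := rfl
      _ ≤ ∑' k : ℤ, |c k * N k (x - (n:ℝ))| := h1
      _ = ∑' k : ℤ, |c k| * N k (x - (n:ℝ)) := by
          apply tsum_congr; intro k
          rw [abs_mul, abs_of_nonneg (hNnn _ _)]
  have hsumm2 : ∀ n : ℤ, Summable fun k : ℤ => |c k| * N k (x - (n:ℝ)) := fun n =>
    (hsummN (x - (n:ℝ))).congr (fun k => by rw [abs_mul, abs_of_nonneg (hNnn _ _)])
  have hbk : ∀ k : ℤ, ∑ n ∈ F, |c k| * N k (x - (n:ℝ)) ≤ (C * q ^ k.natAbs) * (m:ℝ) := by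
    intro k
    rw [← Finset.mul_sum]
    have hsb : ∑ n ∈ F, N k (x - (n:ℝ)) ≤ (m:ℝ) := by
      have heq : ∀ n : ℤ, N k (x - (n:ℝ)) = bspline m ((x + (m:ℝ)/2 - (k:ℝ)) - (n:ℝ)) := by
        intro n; rw [hN]; ring_nf
      simp_rw [heq]
      exact sum_bspline_le m (x + (m:ℝ)/2 - (k:ℝ)) F
    exact mul_le_mul (hc k) hsb (Finset.sum_nonneg fun n _ => hNnn _ _) (by positivity)
  calc ∑ n ∈ F, |Lc (x - (n:ℝ))|
      ≤ ∑ n ∈ F, ∑' k : ℤ, |c k| * N k (x - (n:ℝ)) :=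
        Finset.sum_le_sum (fun n _ => hLcbound n)
    _ = ∑' k : ℤ, ∑ n ∈ F, |c k| * N k (x - (n:ℝ)) :=
        (Summable.tsum_finsetSum (fun n _ => hsumm2 n)).symm
    _ ≤ ∑' k : ℤ, (C * q ^ k.natAbs) * (m:ℝ) := by
        refine Summable.tsum_le_tsum hbk ?_ ((hqsum.mul_left C).mul_right (m:ℝ))
        exact Summable.of_nonneg_of_le
          (fun k => Finset.sum_nonneg fun n _ => mul_nonneg (abs_nonneg _) (hNnn _ _))
          hbk ((hqsum.mul_left C).mul_right (m:ℝ))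
    _ = ∑' k : ℤ, (C * (m:ℝ)) * q ^ k.natAbs := by
        apply tsum_congr; intro k; ring
    _ = (C * (m:ℝ)) * ∑' k : ℤ, q ^ k.natAbs := tsum_mul_left
    _ = (m:ℝ) * C * ∑' k : ℤ, q ^ k.natAbs := by ring

/-- the fundamental spline interpolation operator `J^m` is bounded
on `L_∞`: `‖J^m f‖_∞ ≤ K(m) ‖f‖_∞` for every bounded `f` on `ℝ^d`. -/
theorem Jm_bounded_on_Linfty (d m : ℕ) (hd : 1 ≤ d) (hm : 1 ≤ m)
    (Lc : ℝ → ℝ) (hLc : IsCardinalSpline m Lc) :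
    ∃ K > (0:ℝ), ∀ f : (Fin d → ℝ) → ℝ, ∀ M : ℝ, (∀ x, |f x| ≤ M) →
      ∀ x : Fin d → ℝ, |JNm d 0 Lc f x| ≤ K * M := by
  classical
  obtain ⟨⟨c, ⟨C, hC, q, hq0, hq1, hc⟩, hrep⟩, _⟩ := hLc
  have hqsum : Summable fun k : ℤ => q ^ k.natAbs := by
    apply Summable.of_nat_of_neg
    · simpa using summable_geometric_of_lt_one hq0.le hq1
    · have h0 : ∀ n : ℕ, ((-n : ℤ)).natAbs = n := fun n => by simp
      simpa [h0] using summable_geometric_of_lt_one hq0.le hq1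
  set T : ℝ := ∑' k : ℤ, q ^ k.natAbs with hT
  have hT1 : 1 ≤ T := by
    have := Summable.le_tsum hqsum 0 (fun k _ => pow_nonneg hq0.le _)
    simpa using this
  set S : ℝ := (m:ℝ) * C * T with hS
  have hSpos : 0 < S := by
    have hm' : (0:ℝ) < m := by exact_mod_cast hm
    have : (0:ℝ) < T := lt_of_lt_of_le one_pos hT1
    positivity
  refine ⟨S ^ d, pow_pos hSpos d, ?_⟩
  intro f M hf x
  have hM : 0 ≤ M := le_trans (abs_nonneg _) (hf (fun _ => 0))
  unfold JNm
  set g : (Fin d → ℤ) → ℝ :=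
    fun n => f (fun i => (n i : ℝ) / (2:ℝ)^0) * ∏ i, Lc ((2:ℝ)^0 * x i - (n i : ℝ)) with hg
  have hFsum : ∀ F : Finset (Fin d → ℤ), ∑ n ∈ F, |g n| ≤ S ^ d * M := by
    intro F
    have hgb : ∀ n, |g n| ≤ M * ∏ i, |Lc ((2:ℝ)^0 * x i - (n i : ℝ))| := by
      intro n
      rw [hg]
      rw [abs_mul, Finset.abs_prod]
      exact mul_le_mul_of_nonneg_right (hf _)
        (Finset.prod_nonneg fun i _ => abs_nonneg _)
    set G : Finset (Fin d → ℤ) :=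
      Fintype.piFinset (fun i => F.image (fun n => n i)) with hG
    have hFG : F ⊆ G := by
      intro n hn
      rw [hG, Fintype.mem_piFinset]
      exact fun i => Finset.mem_image.mpr ⟨n, hn, rfl⟩
    calc ∑ n ∈ F, |g n|
        ≤ ∑ n ∈ F, M * ∏ i, |Lc ((2:ℝ)^0 * x i - (n i : ℝ))| :=
          Finset.sum_le_sum (fun n _ => hgb n)
      _ ≤ ∑ n ∈ G, M * ∏ i, |Lc ((2:ℝ)^0 * x i - (n i : ℝ))| :=
          Finset.sum_le_sum_of_subset_of_nonneg hFG (fun n _ _ =>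
            mul_nonneg hM (Finset.prod_nonneg fun i _ => abs_nonneg _))
      _ = M * ∑ n ∈ G, ∏ i, |Lc ((2:ℝ)^0 * x i - (n i : ℝ))| := by
          rw [Finset.mul_sum]
      _ = M * ∏ i, ∑ k ∈ (F.image (fun n => n i) : Finset ℤ), |Lc ((2:ℝ)^0 * x i - (k : ℝ))| := by
          have hps : ∑ n ∈ G, ∏ i, |Lc ((2:ℝ)^0 * x i - ((n i : ℤ) : ℝ))|
              = ∏ i, ∑ k ∈ (F.image (fun n => n i) : Finset ℤ), |Lc ((2:ℝ)^0 * x i - (k : ℝ))| :=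
            (Finset.prod_univ_sum (fun i => (F.image (fun n => n i) : Finset ℤ))
              (fun (i : Fin d) (k : ℤ) => |Lc ((2:ℝ)^0 * x i - (k:ℝ))|)).symm
          rw [hps]
      _ ≤ M * ∏ i : Fin d, S := by
          apply mul_le_mul_of_nonneg_left _ hM
          apply Finset.prod_le_prod
          · exact fun i _ => Finset.sum_nonneg fun k _ => abs_nonneg _
          · intro i _
            rw [hS, hT]
            exact sum_Lc_le m Lc c C q hC hq0 hq1 hc hrep ((2:ℝ)^0 * x i) _
      _ = M * S ^ d := by
          rw [Finset.prod_const, Finset.card_univ, Fintype.card_fin]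
      _ = S ^ d * M := by ring
  by_cases hsum : Summable g
  · have habs : Summable fun n => |g n| := summable_abs_iff.mpr hsum
    have hnorm : Summable fun n => ‖g n‖ := by
      simpa only [Real.norm_eq_abs] using habs
    calc |∑' n, g n| = ‖∑' n, g n‖ := (Real.norm_eq_abs _).symm
      _ ≤ ∑' n, ‖g n‖ := norm_tsum_le_tsum_norm hnorm
      _ = ∑' n, |g n| := tsum_congr fun n => Real.norm_eq_abs _
      _ ≤ S ^ d * M := Summable.tsum_le_of_sum_le habs hFsum
  · rw [tsum_eq_zero_of_not_summable hsum]
    simpa using mul_nonneg (pow_nonneg hSpos.le d) hM
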